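/- arXiv:2504.01703 — 6 statements merged into one kernel-verified Lean document; each statement's English description precedes it below -/
import Mathlib

section
/- Let v, f, s : S → ℝ≥0 be measurable with (Pv)(x) ≤ v(x) − f(x) + s(x) for all x in S, where P is the transition kernel of a Markov chain (X_n). Then for any stopping time τ (with respect to the natural filtration) and any n, E_x[∑_{i=0}^{(τ∧n)−1} f(X_i)] ≤ v(x) + E_x[∑_{i=0}^{(τ∧n)−1} s(X_i)]. -/
open MeasureTheory ProbabilityTheory
open scoped ENNReal

/-- The natural filtration of a process `X : ℕ → Ω → S`. -/
def naturalFiltration {Ω S : Type*} [mΩ : MeasurableSpace Ω] [MeasurableSpace S]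
    (X : ℕ → Ω → S) (hX : ∀ n, Measurable (X n)) : MeasureTheory.Filtration ℕ mΩ where
  seq n := ⨆ i ∈ Set.Iic n, MeasurableSpace.comap (X i) inferInstance
  mono' := fun n m hnm => by
    exact iSup_le fun i => iSup_le fun hi =>
      le_iSup₂ (f := fun i (_ : i ∈ Set.Iic m) => MeasurableSpace.comap (X i) inferInstance)
        i (le_trans hi hnm)
  le' := fun n => by
    exact iSup_le fun i => iSup_le fun _ => (hX i).comap_le

/-- Generalized Comparison Theorem: if `Pv + f ≤ v + s` pointwise (i.e. the drift
inequality `Pv ≤ v - f + s` for nonnegative `v, f, s`), then for a Markov chain `X`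
started at `x` and any stopping time `τ` for the natural filtration,
`E_x ∑_{i<τ∧n} f(X_i) ≤ v(x) + E_x ∑_{i<τ∧n} s(X_i)` for every `n`. -/
theorem comparison_theorem_stopping_time
    {Ω S : Type*} [MeasurableSpace Ω] [MeasurableSpace S]
    (μ : Measure Ω) [IsProbabilityMeasure μ]
    (P : Kernel S S) [IsMarkovKernel P]
    (X : ℕ → Ω → S) (hX : ∀ n, Measurable (X n))
    (x : S) (hstart : ∀ᵐ ω ∂μ, X 0 ω = x)
    (hMarkov : ∀ (n : ℕ) (g : S → ℝ≥0∞), Measurable g →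
      ∀ A : Set Ω, MeasurableSet[(naturalFiltration X hX) n] A →
        ∫⁻ ω in A, g (X (n + 1) ω) ∂μ = ∫⁻ ω in A, (∫⁻ y, g y ∂(P (X n ω))) ∂μ)
    (v f s : S → ℝ≥0∞) (hv : Measurable v) (hf : Measurable f) (hs : Measurable s)
    (hdrift : ∀ y, (∫⁻ z, v z ∂(P y)) + f y ≤ v y + s y)
    (τ : Ω → ℕ) (hτ : IsStoppingTime (naturalFiltration X hX) (fun ω => (τ ω : WithTop ℕ))) (n : ℕ) :
    ∫⁻ ω, ∑ i ∈ Finset.range (min (τ ω) n), f (X i ω) ∂μ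
      ≤ v x + ∫⁻ ω, ∑ i ∈ Finset.range (min (τ ω) n), s (X i ω) ∂μ := by
  set F := naturalFiltration X hX with hF
  have main : ∀ m : ℕ,
      ∫⁻ ω, (v (X (min (τ ω) m) ω) + ∑ i ∈ Finset.range (min (τ ω) m), f (X i ω)) ∂μ
        ≤ v x + ∫⁻ ω, ∑ i ∈ Finset.range (min (τ ω) m), s (X i ω) ∂μ := by
    intro m
    induction m with
    | zero =>
      simp only [Nat.min_zero, Finset.range_zero, Finset.sum_empty, add_zero]
      have : ∫⁻ ω, v (X 0 ω) ∂μ = ∫⁻ _, v x ∂μ :=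
        lintegral_congr_ae (hstart.mono fun ω h => by simp [h])
      rw [this, lintegral_const, measure_univ, mul_one]
      exact le_add_right le_rfl
    | succ m ih =>
      set A : Set Ω := {ω | m < τ ω} with hAdef
      have hAF : MeasurableSet[F m] A := by
        have := (hτ m).compl
        convert this using 1
        ext ω; simp [hAdef, not_le]
      have hAm : MeasurableSet A := F.le m _ hAF
      have hPvX : Measurable fun ω => ∫⁻ y, v y ∂(P (X m ω)) :=
        (hv.lintegral_kernel (κ := P)).comp (hX m)
      have hsXm : Measurable fun ω => s (X m ω) := hs.comp (hX m)
      have hvX1 : Measurable fun ω => v (X (m + 1) ω) := hv.comp (hX (m + 1))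
      have hmin1 : ∀ ω ∈ A, min (τ ω) (m + 1) = m + 1 := fun ω hω =>
        min_eq_right (Nat.succ_le_of_lt hω)
      have hminA : ∀ ω ∈ A, min (τ ω) m = m := fun ω hω =>
        min_eq_right (le_of_lt hω)
      have hminC : ∀ ω ∈ Aᶜ, min (τ ω) (m + 1) = min (τ ω) m := fun ω hω => by
        have h : τ ω ≤ m := not_lt.mp hω
        rw [min_eq_left h, min_eq_left (h.trans (Nat.le_succ m))]
      have hs_split : ∫⁻ ω, ∑ i ∈ Finset.range (min (τ ω) (m + 1)), s (X i ω) ∂μ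
          = (∫⁻ ω, ∑ i ∈ Finset.range (min (τ ω) m), s (X i ω) ∂μ)
            + ∫⁻ ω in A, s (X m ω) ∂μ := by
        have e1 := (lintegral_add_compl
          (fun ω => ∑ i ∈ Finset.range (min (τ ω) (m + 1)), s (X i ω)) hAm (μ := μ)).symm
        have e2 := (lintegral_add_compl
          (fun ω => ∑ i ∈ Finset.range (min (τ ω) m), s (X i ω)) hAm (μ := μ)).symm
        have h1 : ∫⁻ ω in A, ∑ i ∈ Finset.range (min (τ ω) (m + 1)), s (X i ω) ∂μ
            = ∫⁻ ω in A, ((∑ i ∈ Finset.range (min (τ ω) m), s (X i ω)) + s (X m ω)) ∂μ := by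
          apply setLIntegral_congr_fun hAm (fun ω hω => ?_)
          rw [hmin1 ω hω, hminA ω hω, Finset.sum_range_succ]
        have h2 : ∫⁻ ω in Aᶜ, ∑ i ∈ Finset.range (min (τ ω) (m + 1)), s (X i ω) ∂μ
            = ∫⁻ ω in Aᶜ, ∑ i ∈ Finset.range (min (τ ω) m), s (X i ω) ∂μ := by
          apply setLIntegral_congr_fun hAm.compl (fun ω hω => ?_)
          rw [hminC ω hω]
        rw [e1, e2, h1, h2, lintegral_add_right _ hsXm]
        ring
      calc ∫⁻ ω, (v (X (min (τ ω) (m + 1)) ω)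
              + ∑ i ∈ Finset.range (min (τ ω) (m + 1)), f (X i ω)) ∂μ
          = (∫⁻ ω in A, (v (X (min (τ ω) (m + 1)) ω)
              + ∑ i ∈ Finset.range (min (τ ω) (m + 1)), f (X i ω)) ∂μ)
            + ∫⁻ ω in Aᶜ, (v (X (min (τ ω) (m + 1)) ω)
              + ∑ i ∈ Finset.range (min (τ ω) (m + 1)), f (X i ω)) ∂μ :=
          (lintegral_add_compl _ hAm).symm
        _ = ((∫⁻ ω in A, v (X (m + 1) ω) ∂μ)
              + ∫⁻ ω in A, (f (X m ω) + ∑ i ∈ Finset.range m, f (X i ω)) ∂μ)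
            + ∫⁻ ω in Aᶜ, (v (X (min (τ ω) m) ω)
              + ∑ i ∈ Finset.range (min (τ ω) m), f (X i ω)) ∂μ := by
          congr 1
          · rw [← lintegral_add_left hvX1]
            apply setLIntegral_congr_fun hAm (fun ω hω => ?_)
            rw [hmin1 ω hω, Finset.sum_range_succ]
            ring
          · apply setLIntegral_congr_fun hAm.compl (fun ω hω => ?_)
            rw [hminC ω hω]
        _ = (∫⁻ ω in A, ((∫⁻ y, v y ∂(P (X m ω))) + f (X m ω)
              + ∑ i ∈ Finset.range m, f (X i ω)) ∂μ)
            + ∫⁻ ω in Aᶜ, (v (X (min (τ ω) m) ω)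
              + ∑ i ∈ Finset.range (min (τ ω) m), f (X i ω)) ∂μ := by
          rw [hMarkov m v hv A hAF, ← lintegral_add_left hPvX]
          congr 1
          exact lintegral_congr fun ω => by ring
        _ ≤ (∫⁻ ω in A, (v (X m ω) + s (X m ω)
              + ∑ i ∈ Finset.range m, f (X i ω)) ∂μ)
            + ∫⁻ ω in Aᶜ, (v (X (min (τ ω) m) ω)
              + ∑ i ∈ Finset.range (min (τ ω) m), f (X i ω)) ∂μ :=
          add_le_add
            (lintegral_mono fun ω => add_le_add (hdrift (X m ω)) le_rfl) le_rfl
        _ = ((∫⁻ ω in A, (v (X (min (τ ω) m) ω)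
              + ∑ i ∈ Finset.range (min (τ ω) m), f (X i ω)) ∂μ)
              + ∫⁻ ω in A, s (X m ω) ∂μ)
            + ∫⁻ ω in Aᶜ, (v (X (min (τ ω) m) ω)
              + ∑ i ∈ Finset.range (min (τ ω) m), f (X i ω)) ∂μ := by
          congr 1
          rw [show (∫⁻ ω in A, (v (X m ω) + s (X m ω)
                + ∑ i ∈ Finset.range m, f (X i ω)) ∂μ)
              = ∫⁻ ω in A, ((v (X (min (τ ω) m) ω)
                + ∑ i ∈ Finset.range (min (τ ω) m), f (X i ω)) + s (X m ω)) ∂μ from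
            setLIntegral_congr_fun hAm (fun ω hω => by
              rw [hminA ω hω]; ring), lintegral_add_right _ hsXm]
        _ = ((∫⁻ ω in A, (v (X (min (τ ω) m) ω)
              + ∑ i ∈ Finset.range (min (τ ω) m), f (X i ω)) ∂μ)
              + ∫⁻ ω in Aᶜ, (v (X (min (τ ω) m) ω)
              + ∑ i ∈ Finset.range (min (τ ω) m), f (X i ω)) ∂μ)
            + ∫⁻ ω in A, s (X m ω) ∂μ := by ring
        _ = (∫⁻ ω, (v (X (min (τ ω) m) ω)
              + ∑ i ∈ Finset.range (min (τ ω) m), f (X i ω)) ∂μ)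
            + ∫⁻ ω in A, s (X m ω) ∂μ := by
          rw [lintegral_add_compl _ hAm]
        _ ≤ (v x + ∫⁻ ω, ∑ i ∈ Finset.range (min (τ ω) m), s (X i ω) ∂μ)
            + ∫⁻ ω in A, s (X m ω) ∂μ := add_le_add ih le_rfl
        _ = v x + ∫⁻ ω, ∑ i ∈ Finset.range (min (τ ω) (m + 1)), s (X i ω) ∂μ := by
          rw [hs_split]; ring
  refine le_trans ?_ (main n)
  exact lintegral_mono fun ω => self_le_add_left _ _
end

section
/- More generally with an m-step minorization: if (Pv)(x) ≤ v(x) + b for all x ∈ S and P^m(x,·) ≥ λφ(·) for x ∈ C with x₀ ∈ C, then φv ≤ (v(x₀) + m·b)/λ. -/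
open MeasureTheory ProbabilityTheory
open scoped ENNReal NNReal

/-- The `n`-fold iterate `P^n` of a Markov kernel. -/
noncomputable def kernelIter {S : Type*} [MeasurableSpace S] (P : Kernel S S) : ℕ → Kernel S S
  | 0 => Kernel.id
  | n + 1 => (kernelIter P n).comp P

lemma kernelIter_drift {S : Type*} [MeasurableSpace S]
    (P : Kernel S S) [IsMarkovKernel P]
    (v : S → ℝ≥0) (hv : Measurable v) (b : ℝ≥0)
    (hdrift : ∀ x, ∫⁻ y, (v y : ℝ≥0∞) ∂(P x) ≤ (v x : ℝ≥0∞) + b) :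
    ∀ n x, ∫⁻ y, (v y : ℝ≥0∞) ∂((kernelIter P n) x) ≤ (v x : ℝ≥0∞) + n * b := by
  intro n
  induction n with
  | zero =>
    intro x
    rw [show kernelIter P 0 = Kernel.id from rfl, Kernel.id_apply,
      lintegral_dirac' _ (show Measurable fun y => (v y : ℝ≥0∞) from hv.coe_nnreal_ennreal)]
    simp
  | succ n ih =>
    intro x
    have hcomp : (kernelIter P (n+1)) x = (P x).bind (kernelIter P n) := by
      simp [kernelIter, Kernel.comp_apply]
    rw [hcomp, MeasureTheory.Measure.lintegral_bind (kernelIter P n).measurable.aemeasurable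
      hv.coe_nnreal_ennreal.aemeasurable]
    calc ∫⁻ z, ∫⁻ y, (v y : ℝ≥0∞) ∂((kernelIter P n) z) ∂(P x)
        ≤ ∫⁻ z, ((v z : ℝ≥0∞) + n * b) ∂(P x) := lintegral_mono ih
      _ = (∫⁻ z, (v z : ℝ≥0∞) ∂(P x)) + n * b := by
          rw [lintegral_add_right _ measurable_const, lintegral_const,
            measure_univ, mul_one]
      _ ≤ (v x : ℝ≥0∞) + b + n * b := by gcongr; exact hdrift x
      _ = (v x : ℝ≥0∞) + ((n + 1 : ℕ) : ℝ≥0∞) * b := by push_cast; ring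

/-- If `Pv ≤ v + b` and the `m`-step minorization `P^m(x,·) ≥ λφ(·)` holds on `C`
with `x₀ ∈ C`, then `φ v ≤ (v(x₀) + m·b)/λ`. -/
theorem phi_v_bound_m_step
    {S : Type*} [MeasurableSpace S]
    (P : Kernel S S) [IsMarkovKernel P]
    (C : Set S) (x₀ : S) (hx₀ : x₀ ∈ C)
    (φ : Measure S) [IsProbabilityMeasure φ]
    (l : ℝ≥0∞) (hl0 : 0 < l) (hl1 : l ≤ 1)
    (m : ℕ) (hm : 1 ≤ m)
    (v : S → ℝ≥0) (hv : Measurable v) (b : ℝ≥0)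
    (hdrift : ∀ x, ∫⁻ y, (v y : ℝ≥0∞) ∂(P x) ≤ (v x : ℝ≥0∞) + b)
    (hminor : ∀ x ∈ C, ∀ A : Set S, MeasurableSet A → l * φ A ≤ (kernelIter P m) x A) :
    ∫⁻ y, (v y : ℝ≥0∞) ∂φ ≤ ((v x₀ : ℝ≥0∞) + m * b) / l := by
  have hle : l • φ ≤ (kernelIter P m) x₀ :=
    Measure.le_iff.2 fun A hA => by simpa using hminor x₀ hx₀ A hA
  have h1 : l * ∫⁻ y, (v y : ℝ≥0∞) ∂φ ≤ ∫⁻ y, (v y : ℝ≥0∞) ∂((kernelIter P m) x₀) := by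
    rw [← smul_eq_mul, ← lintegral_smul_measure]
    exact lintegral_mono' hle le_rfl
  have h2 := kernelIter_drift P v hv b hdrift m x₀
  rw [ENNReal.le_div_iff_mul_le (Or.inl hl0.ne') (Or.inl (hl1.trans_lt ENNReal.one_lt_top).ne)]
  calc (∫⁻ y, (v y : ℝ≥0∞) ∂φ) * l = l * ∫⁻ y, (v y : ℝ≥0∞) ∂φ := mul_comm _ _
    _ ≤ _ := h1.trans h2
end

section
/- Let (X_n) be a Markov chain with kernel P started from initial distribution φ, and let τ be a randomized stopping time such that X_τ is distributed φ and E_φ τ < ∞. Define the occupation measure ν(A) = E_φ[∑_{j=0}^{τ−1} 1(X_j ∈ A)] / E_φ τ. Then ν is a probability measure satisfying νP = ν, i.e., ν is stationary for P. -/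
open MeasureTheory ProbabilityTheory
open scoped ENNReal

lemma tsum_ite_lt (n : ℕ) : (∑' j : ℕ, if j < n then (1 : ℝ≥0∞) else 0) = n := by
  rw [tsum_eq_sum (s := Finset.range n) (fun j hj => by
    simp [Finset.mem_range] at hj; simp [hj])]
  rw [Finset.sum_ite_of_true (fun i hi => Finset.mem_range.1 hi)]
  simp

set_option maxHeartbeats 1000000 in
/-- For a Markov chain `X` with kernel `P` started from `φ`, and a (randomized)
stopping time `τ` (w.r.t. a possibly enlarged filtration `ℱ` for which the Markov
property still holds) such that `X_τ ~ φ` and `1 ≤ E_φ τ < ∞`, the occupation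
measure `ν(A) = E_φ[∑_{j<τ} 1(X_j ∈ A)] / E_φ τ` is a stationary probability
measure for `P`. -/
theorem occupation_measure_stationary
    {Ω S : Type*} [mΩ : MeasurableSpace Ω] [MeasurableSpace S]
    (μ : Measure Ω) [IsProbabilityMeasure μ]
    (P : Kernel S S) [IsMarkovKernel P]
    (X : ℕ → Ω → S) (hX : ∀ n, Measurable (X n))
    (ℱ : Filtration ℕ mΩ) (hadapt : ∀ n, Measurable[ℱ n] (X n))
    (hMarkov : ∀ (n : ℕ) (g : S → ℝ≥0∞), Measurable g →
      ∀ A : Set Ω, MeasurableSet[ℱ n] A →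
        ∫⁻ ω in A, g (X (n + 1) ω) ∂μ = ∫⁻ ω in A, (∫⁻ y, g y ∂(P (X n ω))) ∂μ)
    (τ : Ω → ℕ) (hτ : IsStoppingTime ℱ (fun ω => (τ ω : WithTop ℕ))) (hτ1 : ∀ ω, 1 ≤ τ ω)
    (φ : Measure S) [IsProbabilityMeasure φ]
    (h0 : Measure.map (X 0) μ = φ)
    (hτlaw : Measure.map (fun ω => X (τ ω) ω) μ = φ)
    (hEτ : ∫⁻ ω, (τ ω : ℝ≥0∞) ∂μ < ⊤) :
    IsProbabilityMeasure
      ((∫⁻ ω, (τ ω : ℝ≥0∞) ∂μ)⁻¹ •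
        Measure.sum (fun j : ℕ => (μ.restrict {ω | j < τ ω}).map (X j))) ∧
    ((∫⁻ ω, (τ ω : ℝ≥0∞) ∂μ)⁻¹ •
        Measure.sum (fun j : ℕ => (μ.restrict {ω | j < τ ω}).map (X j))).bind (fun y => P y)
      = (∫⁻ ω, (τ ω : ℝ≥0∞) ∂μ)⁻¹ •
        Measure.sum (fun j : ℕ => (μ.restrict {ω | j < τ ω}).map (X j)) := by
  set c : ℝ≥0∞ := ∫⁻ ω, (τ ω : ℝ≥0∞) ∂μ with hc
  set ν : Measure S := Measure.sum (fun j : ℕ => (μ.restrict {ω | j < τ ω}).map (X j)) with hν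
  -- measurability of the sets involved
  have hAj : ∀ j : ℕ, MeasurableSet[ℱ j] {ω | j < τ ω} := by
    intro j
    have : {ω | j < τ ω} = {ω | τ ω ≤ j}ᶜ := by
      ext ω; simp only [Set.mem_setOf_eq, Set.mem_compl_iff, not_le]
    rw [this]
    simpa using (hτ j).compl
  have hAm : ∀ j : ℕ, MeasurableSet {ω | j < τ ω} := fun j => ℱ.le j _ (hAj j)
  have hEq : ∀ j : ℕ, MeasurableSet {ω | τ ω = j} := fun j =>
    ℱ.le j _ (by simpa using hτ.measurableSet_eq j)
  -- 1 ≤ c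
  have hc1 : (1 : ℝ≥0∞) ≤ c := by
    calc (1 : ℝ≥0∞) = ∫⁻ _, 1 ∂μ := by simp
    _ ≤ c := lintegral_mono fun ω => by exact_mod_cast Nat.one_le_cast.2 (hτ1 ω)
  have hc0 : c ≠ 0 := fun h => by simp [h] at hc1
  have hctop : c ≠ ⊤ := hEτ.ne
  -- value of ν on a measurable set
  have hνapp : ∀ s : Set S, MeasurableSet s →
      ν s = ∑' j : ℕ, μ (X j ⁻¹' s ∩ {ω | j < τ ω}) := by
    intro s hs
    rw [hν, Measure.sum_apply _ hs]
    congr 1; funext j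
    rw [Measure.map_apply (hX j) hs, Measure.restrict_apply (hX j hs)]
  -- τ ≥ 1, so {ω | 0 < τ ω} = univ
  have hA0 : {ω : Ω | 0 < τ ω} = Set.univ := by
    ext ω; simp [Nat.lt_of_lt_of_le Nat.zero_lt_one (hτ1 ω)]
  -- the map ω ↦ X (τ ω) ω
  set f : Ω → S := fun ω => X (τ ω) ω with hf
  have hfpre : ∀ t : Set S, f ⁻¹' t = ⋃ k, X k ⁻¹' t ∩ {ω | τ ω = k} := by
    intro t; ext ω
    simp only [Set.mem_preimage, Set.mem_iUnion, Set.mem_inter_iff, Set.mem_setOf_eq]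
    constructor
    · intro h; exact ⟨τ ω, h, rfl⟩
    · rintro ⟨k, hk, rfl⟩; exact hk
  have hfm : Measurable f := by
    intro t ht
    rw [hfpre t]
    exact MeasurableSet.iUnion fun k => (hX k ht).inter (hEq k)
  -- key: μ(X_τ ∈ s) = ∑' k, μ(X_k⁻¹ s ∩ {τ = k})
  have hτs : ∀ s : Set S, MeasurableSet s →
      (∑' k : ℕ, μ (X k ⁻¹' s ∩ {ω | τ ω = k})) = φ s := by
    intro s hs
    rw [← hτlaw, Measure.map_apply hfm hs, hfpre s]
    rw [measure_iUnion ?_ (fun k => (hX k hs).inter (hEq k))]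
    intro i j hij
    refine Set.disjoint_left.2 fun ω hωi hωj => hij ?_
    rw [← hωi.2, ← hωj.2]
  -- the telescoping identity
  have hkey : ∀ s : Set S, MeasurableSet s →
      (∑' j : ℕ, μ (X (j + 1) ⁻¹' s ∩ {ω | j < τ ω})) = ν s := by
    intro s hs
    have hsplit : ∀ j : ℕ,
        μ (X (j + 1) ⁻¹' s ∩ {ω | j < τ ω}) =
          μ (X (j + 1) ⁻¹' s ∩ {ω | j + 1 < τ ω}) +
          μ (X (j + 1) ⁻¹' s ∩ {ω | τ ω = j + 1}) := by
      intro j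
      have hU : X (j + 1) ⁻¹' s ∩ {ω | j < τ ω} =
          (X (j + 1) ⁻¹' s ∩ {ω | j + 1 < τ ω}) ∪
          (X (j + 1) ⁻¹' s ∩ {ω | τ ω = j + 1}) := by
        rw [← Set.inter_union_distrib_left]
        congr 1
        ext ω
        simp only [Set.mem_setOf_eq, Set.mem_union]
        omega
      rw [hU, measure_union ?_ ((hX (j + 1) hs).inter (hEq (j + 1)))]
      refine Set.disjoint_left.2 fun ω hω1 hω2 => ?_
      have := hω1.2; have := hω2.2
      simp only [Set.mem_setOf_eq] at *
      omega
    calc (∑' j : ℕ, μ (X (j + 1) ⁻¹' s ∩ {ω | j < τ ω}))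
        = (∑' j : ℕ, μ (X (j + 1) ⁻¹' s ∩ {ω | j + 1 < τ ω})) +
          (∑' j : ℕ, μ (X (j + 1) ⁻¹' s ∩ {ω | τ ω = j + 1})) := by
          simp_rw [hsplit]; exact ENNReal.tsum_add
      _ = (∑' j : ℕ, μ (X (j + 1) ⁻¹' s ∩ {ω | j + 1 < τ ω})) + φ s := by
          congr 1
          have h0' : μ (X 0 ⁻¹' s ∩ {ω | τ ω = 0}) = 0 := by
            have he : {ω : Ω | τ ω = 0} = ∅ := by
              ext ω
              simp only [Set.mem_setOf_eq, Set.mem_empty_iff_false, iff_false]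
              have := hτ1 ω; omega
            simp [he]
          rw [← hτs s hs]
          conv_rhs => rw [tsum_eq_zero_add' (f := fun k : ℕ =>
            μ (X k ⁻¹' s ∩ {ω | τ ω = k})) ENNReal.summable]
          rw [h0', zero_add]
      _ = ν s := by
          rw [hνapp s hs, tsum_eq_zero_add' (f := fun j : ℕ =>
            μ (X j ⁻¹' s ∩ {ω | j < τ ω})) ENNReal.summable]
          have : μ (X 0 ⁻¹' s ∩ {ω | 0 < τ ω}) = φ s := by
            rw [hA0, Set.inter_univ, ← h0, Measure.map_apply (hX 0) hs]
          rw [this, add_comm]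
  -- total mass of ν is c
  have hνuniv : ν Set.univ = c := by
    rw [hνapp _ MeasurableSet.univ]
    simp only [Set.preimage_univ, Set.univ_inter]
    have : ∀ ω, ((τ ω : ℝ≥0∞)) = ∑' j : ℕ, Set.indicator {ω | j < τ ω} (fun _ => (1 : ℝ≥0∞)) ω := by
      intro ω
      rw [← tsum_ite_lt (τ ω)]
      congr 1; funext j
      by_cases h : j < τ ω <;> simp [Set.indicator_apply, h]
    rw [hc]
    symm
    calc ∫⁻ ω, (τ ω : ℝ≥0∞) ∂μ
        = ∫⁻ ω, ∑' j : ℕ, Set.indicator {ω | j < τ ω} (fun _ => (1 : ℝ≥0∞)) ω ∂μ := by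
          congr 1; funext ω; exact this ω
      _ = ∑' j : ℕ, ∫⁻ ω, Set.indicator {ω | j < τ ω} (fun _ => (1 : ℝ≥0∞)) ω ∂μ :=
          lintegral_tsum fun j => ((measurable_const.indicator (hAm j)).aemeasurable)
      _ = ∑' j : ℕ, μ {ω | j < τ ω} := by
          congr 1; funext j
          exact lintegral_indicator_one (hAm j)
  constructor
  · constructor
    rw [Measure.smul_apply, smul_eq_mul, hνuniv]
    exact ENNReal.inv_mul_cancel hc0 hctop
  · ext s hs
    rw [Measure.bind_apply hs P.measurable.aemeasurable]
    rw [lintegral_smul_measure, Measure.smul_apply, smul_eq_mul]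
    congr 1
    -- ∫⁻ a, P a s ∂ν = ν s
    have hsum' : ∫⁻ a, P a s ∂ν = ∑' j : ℕ, μ (X (j + 1) ⁻¹' s ∩ {ω | j < τ ω}) := by
      rw [hν, lintegral_sum_measure]
      refine tsum_congr fun j => ?_
      rw [lintegral_map (P.measurable_coe hs) (hX j)]
      have hmk := hMarkov j (Set.indicator s (fun _ => (1 : ℝ≥0∞)))
        (measurable_const.indicator hs) {ω | j < τ ω} (hAj j)
      have hin : ∀ ω : Ω, (∫⁻ y, Set.indicator s (fun _ => (1 : ℝ≥0∞)) y ∂(P (X j ω)))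
          = P (X j ω) s := fun ω => lintegral_indicator_one hs
      simp_rw [hin] at hmk
      rw [← hmk]
      have : ∀ ω : Ω, Set.indicator s (fun _ => (1 : ℝ≥0∞)) (X (j + 1) ω) =
          Set.indicator (X (j + 1) ⁻¹' s) (fun _ => (1 : ℝ≥0∞)) ω := by
        intro ω
        by_cases h : X (j + 1) ω ∈ s <;> simp [Set.indicator_apply, h]
      simp_rw [this]
      have hfin := lintegral_indicator_one (μ := μ.restrict {ω | j < τ ω}) (hX (j + 1) hs)
      rw [Measure.restrict_apply (hX (j + 1) hs)] at hfin
      exact hfin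
    rw [hsum', hkey s hs]
end

section
/- Let (a*_n), (b*_n) be real sequences and (p_j)_{j≥1} a probability sequence with a*_n = b*_n + ∑_{j=1}^n a*_{n−j} p_j for all n. If (b*_n) is absolutely summable, then a*_n = ∑_{j=0}^n b*_{n−j} u_j where (u_j) is the associated renewal sequence, and (a*_n) is bounded: |a*_n| ≤ ∑_{j=0}^∞ |b*_j|. -/
/-- Signed renewal equation: if `a_n = b_n + ∑_{j=1}^n a_{n-j} p_j` with `(p_j)` a
sub-probability sequence and `(b_n)` absolutely summable, then
`a_n = ∑_{j=0}^n b_{n-j} u_j` and `|a_n| ≤ ∑_j |b_j|` for all `n`. -/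
theorem signed_renewal_equation_bounded
    (a b p u : ℕ → ℝ)
    (hp : ∀ j, 0 ≤ p j) (hp0 : p 0 = 0)
    (hpsummable : Summable p) (hptsum : ∑' j, p j ≤ 1)
    (hu0 : u 0 = 1)
    (hu : ∀ n, 1 ≤ n → u n = ∑ j ∈ Finset.Icc 1 n, p j * u (n - j))
    (hren : ∀ n, a n = b n + ∑ j ∈ Finset.Icc 1 n, a (n - j) * p j)
    (habs : Summable (fun n => |b n|)) :
    (∀ n, a n = ∑ j ∈ Finset.range (n + 1), b (n - j) * u j) ∧
    (∀ n, |a n| ≤ ∑' j, |b j|) := by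
  -- u is in [0,1]
  have hub : ∀ n, 0 ≤ u n ∧ u n ≤ 1 := by
    intro n
    induction n using Nat.strong_induction_on with
    | _ n ih =>
      rcases Nat.eq_zero_or_pos n with h | h
      · simp [h, hu0]
      · rw [hu n h]
        constructor
        · apply Finset.sum_nonneg
          intro j hj
          rw [Finset.mem_Icc] at hj
          exact mul_nonneg (hp j) (ih (n - j) (by omega)).1
        · calc ∑ j ∈ Finset.Icc 1 n, p j * u (n - j)
              ≤ ∑ j ∈ Finset.Icc 1 n, p j := by
                apply Finset.sum_le_sum
                intro j hj
                rw [Finset.mem_Icc] at hj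
                exact mul_le_of_le_one_right (hp j) (ih (n - j) (by omega)).2
            _ ≤ ∑' j, p j := Summable.sum_le_tsum _ (fun j _ => hp j) hpsummable
            _ ≤ 1 := hptsum
  have key : ∀ n, a n = ∑ j ∈ Finset.range (n + 1), b (n - j) * u j := by
    intro n
    induction n using Nat.strong_induction_on with
    | _ n ih =>
      rcases Nat.eq_zero_or_pos n with h | h
      · subst h; rw [hren 0]; simp [hu0]
      · have step1 : a n = b n + ∑ j ∈ Finset.Icc 1 n,
            (∑ m ∈ Finset.range (n - j + 1), b (n - j - m) * u m) * p j := by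
          rw [hren n]
          congr 1
          apply Finset.sum_congr rfl
          intro j hj
          rw [Finset.mem_Icc] at hj
          rw [ih (n - j) (by omega)]
        rw [step1]
        -- RHS split off j = 0
        rw [Finset.sum_range_succ']
        simp only [Nat.sub_zero, hu0, mul_one]
        have hIcc : ∀ f : ℕ → ℝ, ∑ i ∈ Finset.range n, f (i + 1) = ∑ j ∈ Finset.Icc 1 n, f j := by
          intro f
          rw [show Finset.Icc 1 n = Finset.Ico 1 (n + 1) from rfl, Finset.sum_Ico_eq_sum_range]
          simp [add_comm]
        rw [hIcc (fun j => b (n - j) * u j), add_comm]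
        congr 1
        -- expand u j and swap sums
        have expand : ∑ j ∈ Finset.Icc 1 n, b (n - j) * u j
            = ∑ j ∈ Finset.Icc 1 n, ∑ k ∈ Finset.Icc 1 j, b (n - j) * (p k * u (j - k)) := by
          apply Finset.sum_congr rfl
          intro j hj
          rw [Finset.mem_Icc] at hj
          rw [hu j hj.1, Finset.mul_sum]
        rw [expand]
        rw [Finset.sum_comm' (t' := Finset.Icc 1 n) (s' := fun k => Finset.Icc k n)
          (by intro x y; simp only [Finset.mem_Icc]; omega)]
        apply Finset.sum_congr rfl
        intro k hk
        rw [Finset.mem_Icc] at hk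
        rw [show Finset.Icc k n = Finset.Ico k (n + 1) from rfl, Finset.sum_Ico_eq_sum_range,
          Finset.sum_mul]
        have hrng : n + 1 - k = n - k + 1 := by omega
        rw [hrng]
        apply Finset.sum_congr rfl
        intro m hm
        rw [Finset.mem_range] at hm
        have h1 : n - (k + m) = n - k - m := by omega
        have h2 : k + m - k = m := by omega
        rw [h1, h2]
        ring
  refine ⟨key, fun n => ?_⟩
  rw [key n]
  calc |∑ j ∈ Finset.range (n + 1), b (n - j) * u j|
      ≤ ∑ j ∈ Finset.range (n + 1), |b (n - j) * u j| := Finset.abs_sum_le_sum_abs _ _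
    _ ≤ ∑ j ∈ Finset.range (n + 1), |b (n - j)| := by
        apply Finset.sum_le_sum
        intro j _
        rw [abs_mul]
        calc |b (n - j)| * |u j| ≤ |b (n - j)| * 1 := by
              apply mul_le_mul_of_nonneg_left _ (abs_nonneg _)
              rw [abs_of_nonneg (hub j).1]
              exact (hub j).2
          _ = |b (n - j)| := mul_one _
    _ = ∑ j ∈ Finset.range (n + 1), |b j| := by
        simpa using Finset.sum_range_reflect (fun j => |b j|) (n + 1)
    _ ≤ ∑' j, |b j| := Summable.sum_le_tsum _ (fun j _ => abs_nonneg _) habs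
end

section
/- Suppose a Markov chain (X_n) with kernel P admits a randomized stopping time τ ≥ 1 such that (X_0,…,X_{τ−1},τ) is independent of (X_τ, X_{τ+1},…) and the post-τ process has law P_φ for a probability measure φ. If M_f := E_φ[∑_{j=0}^{τ−1} f(X_j)] < ∞ for a nonnegative measurable f, then sup_{n≥0} E_φ f(X_n) ≤ M_f. -/
open MeasureTheory ProbabilityTheory
open scoped ENNReal

/-- Wide-sense regeneration bound on marginal expectations: if `τ ≥ 1` is a randomized
stopping time such that the pre-`τ` segment (with `τ`) is independent of the post-`τ`
process, the post-`τ` process has the same law as the chain itself (started at `φ`),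
and `M_f = E_φ ∑_{j<τ} f(X_j) < ∞`, then `sup_n E_φ f(X_n) ≤ M_f`. -/
theorem marginal_expectation_bound
    {Ω S : Type*} [MeasurableSpace Ω] [MeasurableSpace S]
    (μ : Measure Ω) [IsProbabilityMeasure μ]
    (X : ℕ → Ω → S) (hX : ∀ n, Measurable (X n))
    (τ : Ω → ℕ) (hτ : Measurable τ) (hτ1 : ∀ ω, 1 ≤ τ ω)
    (φ : Measure S) [IsProbabilityMeasure φ]
    (h0 : Measure.map (X 0) μ = φ)
    (hindep : IndepFun
      (fun ω => ((fun i => X (min i (τ ω)) ω, τ ω) : (ℕ → S) × ℕ))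
      (fun ω => (fun n => X (τ ω + n) ω : ℕ → S)) μ)
    (hpostlaw : Measure.map (fun ω => (fun n => X (τ ω + n) ω : ℕ → S)) μ
      = Measure.map (fun ω => (fun n => X n ω : ℕ → S)) μ)
    (f : S → ℝ≥0∞) (hf : Measurable f)
    (hM : ∫⁻ ω, ∑ j ∈ Finset.range (τ ω), f (X j ω) ∂μ < ⊤) :
    ⨆ n : ℕ, ∫⁻ ω, f (X n ω) ∂μ ≤ ∫⁻ ω, ∑ j ∈ Finset.range (τ ω), f (X j ω) ∂μ := by
  classical
  set W : Ω → ℕ → S := fun ω n => X n ω with hWdef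
  have hWmeas : Measurable W := measurable_pi_lambda _ hX
  set Z : Ω → ℕ → S := fun ω n => X (τ ω + n) ω with hZdef
  have hZmeas : Measurable Z := by
    apply measurable_pi_lambda
    intro n
    have h1 : (fun ω => X (τ ω + n) ω)
        = (fun p : Ω × ℕ => X (p.2 + n) p.1) ∘ (fun ω => (ω, τ ω)) := rfl
    rw [h1]
    exact (measurable_from_prod_countable_left
        (f := fun p : Ω × ℕ => X (p.2 + n) p.1) fun k => hX (k + n)).comp
      (show Measurable fun ω : Ω => (ω, τ ω) from measurable_id.prodMk hτ)
  set Y : Ω → (ℕ → S) × ℕ := fun ω => ((fun i => X (min i (τ ω)) ω, τ ω)) with hYdef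
  have hYmeas : Measurable Y := by
    apply Measurable.prodMk _ hτ
    apply measurable_pi_lambda
    intro i
    have h1 : (fun ω => X (min i (τ ω)) ω)
        = (fun p : Ω × ℕ => X (min i p.2) p.1) ∘ (fun ω => (ω, τ ω)) := rfl
    rw [h1]
    exact (measurable_from_prod_countable_left
        (f := fun p : Ω × ℕ => X (min i p.2) p.1) fun k => hX (min i k)).comp
      (show Measurable fun ω : Ω => (ω, τ ω) from measurable_id.prodMk hτ)
  -- marginal laws match for the shifted process
  have hlawZ : ∀ m, ∫⁻ ω, f (Z ω m) ∂μ = ∫⁻ ω, f (X m ω) ∂μ := by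
    intro m
    have hfm : Measurable fun z : ℕ → S => f (z m) := hf.comp (measurable_pi_apply m)
    calc ∫⁻ ω, f (Z ω m) ∂μ = ∫⁻ z, f (z m) ∂(Measure.map Z μ) :=
          (lintegral_map hfm hZmeas).symm
      _ = ∫⁻ z, f (z m) ∂(Measure.map W μ) := by rw [hpostlaw]
      _ = ∫⁻ ω, f (X m ω) ∂μ := lintegral_map hfm hWmeas
  set p : ℕ → ℝ≥0∞ := fun k => μ {ω | τ ω = k} with hpdef
  set a : ℕ → ℝ≥0∞ := fun j => ∫⁻ ω, (if j < τ ω then f (X j ω) else 0) ∂μ with hadef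
  have hτset : ∀ s : Set ℕ, MeasurableSet (τ ⁻¹' s) := fun s => hτ .of_discrete
  have hmι : ∀ j, Measurable fun ω => if j < τ ω then f (X j ω) else 0 := by
    intro j
    exact Measurable.ite (hτset {k | j < k}) (hf.comp (hX j)) measurable_const
  have hmκ : ∀ k m, Measurable fun ω => if τ ω = k then f (Z ω m) else 0 := by
    intro k m
    exact Measurable.ite (hτset {k}) (hf.comp ((measurable_pi_apply m).comp hZmeas))
      measurable_const
  -- independence computation
  have hkey : ∀ k m, ∫⁻ ω, (if τ ω = k then f (Z ω m) else 0) ∂μ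
      = p k * ∫⁻ ω, f (X m ω) ∂μ := by
    intro k m
    have hF : Measurable fun q : (ℕ → S) × ℕ => (if q.2 = k then (1 : ℝ≥0∞) else 0) :=
      Measurable.ite (measurable_snd (measurableSet_singleton k)) measurable_const
        measurable_const
    have hG : Measurable fun z : ℕ → S => f (z m) := hf.comp (measurable_pi_apply m)
    have hIF : IndepFun ((fun q : (ℕ → S) × ℕ => (if q.2 = k then (1 : ℝ≥0∞) else 0)) ∘ Y)
        ((fun z : ℕ → S => f (z m)) ∘ Z) μ := hindep.comp hF hG
    have hmul := lintegral_mul_eq_lintegral_mul_lintegral_of_indepFun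
      (hF.comp hYmeas) (hG.comp hZmeas) hIF
    simp only [hYdef, Pi.mul_apply, Function.comp_apply, ite_mul, one_mul, zero_mul]
      at hmul
    have hind : ∫⁻ ω, (if τ ω = k then (1 : ℝ≥0∞) else 0) ∂μ = p k := by
      have h2 : (fun ω => if τ ω = k then (1 : ℝ≥0∞) else 0)
          = Set.indicator {ω | τ ω = k} (fun _ => 1) := by
        funext ω
        by_cases h : τ ω = k <;> simp [h, Set.indicator_apply]
      rw [h2, lintegral_indicator (show MeasurableSet {ω | τ ω = k} from hτset {k}), hpdef]
      simp
    rw [hind] at hmul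
    rw [hmul, hlawZ m]
  -- pointwise decomposition
  have hdecomp : ∀ n ω, f (X n ω) =
      (if n < τ ω then f (X n ω) else 0)
      + ∑ k ∈ Finset.Icc 1 n, (if τ ω = k then f (Z ω (n - k)) else 0) := by
    intro n ω
    by_cases h : n < τ ω
    · rw [if_pos h, Finset.sum_eq_zero, add_zero]
      intro k hk
      rw [if_neg]
      rintro rfl
      exact absurd (Finset.mem_Icc.mp hk).2 (not_le.mpr h)
    · rw [if_neg h, zero_add]
      push_neg at h
      have hτn : τ ω ∈ Finset.Icc 1 n := Finset.mem_Icc.mpr ⟨hτ1 ω, h⟩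
      rw [Finset.sum_eq_single_of_mem (τ ω) hτn
        (fun k _ hne => if_neg fun he => hne he.symm), if_pos rfl, hZdef]
      simp only []
      rw [Nat.add_sub_cancel' h]
  -- renewal equation
  have hrenew : ∀ n, ∫⁻ ω, f (X n ω) ∂μ
      = a n + ∑ k ∈ Finset.Icc 1 n, p k * ∫⁻ ω, f (X (n - k) ω) ∂μ := by
    intro n
    calc ∫⁻ ω, f (X n ω) ∂μ
        = ∫⁻ ω, ((if n < τ ω then f (X n ω) else 0)
            + ∑ k ∈ Finset.Icc 1 n, (if τ ω = k then f (Z ω (n - k)) else 0)) ∂μ :=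
          lintegral_congr (hdecomp n)
      _ = a n + ∑ k ∈ Finset.Icc 1 n,
            ∫⁻ ω, (if τ ω = k then f (Z ω (n - k)) else 0) ∂μ := by
          rw [lintegral_add_left (hmι n), lintegral_finset_sum _ fun k _ => hmκ k (n - k)]
      _ = a n + ∑ k ∈ Finset.Icc 1 n, p k * ∫⁻ ω, f (X (n - k) ω) ∂μ := by
          rw [Finset.sum_congr rfl fun k _ => hkey k (n - k)]
  -- total mass of p over [1,n] is at most 1
  have hpsum : ∀ n, ∑ k ∈ Finset.Icc 1 n, p k ≤ 1 := by
    intro n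
    have hdisj : (Finset.Icc 1 n : Set ℕ).PairwiseDisjoint fun k => {ω | τ ω = k} := by
      intro i _ j _ hij
      exact Set.disjoint_left.mpr fun ω h1 h2 => hij (h1 ▸ h2)
    rw [hpdef]
    rw [← measure_biUnion_finset hdisj fun k _ => hτset {k}]
    exact (measure_mono (Set.subset_univ _)).trans_eq measure_univ
  -- induction: E f(X_n) ≤ ∑_{j ≤ n} a j
  have hbound : ∀ n, ∫⁻ ω, f (X n ω) ∂μ ≤ ∑ j ∈ Finset.range (n + 1), a j := by
    intro n
    induction n using Nat.strong_induction_on with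
    | _ n ih =>
      rw [hrenew n, Finset.sum_range_succ, add_comm (∑ j ∈ Finset.range n, a j) (a n)]
      apply add_le_add_right
      calc ∑ k ∈ Finset.Icc 1 n, p k * ∫⁻ ω, f (X (n - k) ω) ∂μ
          ≤ ∑ k ∈ Finset.Icc 1 n, p k * ∑ j ∈ Finset.range n, a j := by
            apply Finset.sum_le_sum
            intro k hk
            obtain ⟨hk1, hkn⟩ := Finset.mem_Icc.mp hk
            have hlt : n - k < n := Nat.sub_lt (lt_of_lt_of_le hk1 hkn) hk1
            refine mul_le_mul_right ((ih _ hlt).trans ?_) _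
            exact Finset.sum_le_sum_of_subset (Finset.range_mono hlt)
        _ = (∑ k ∈ Finset.Icc 1 n, p k) * ∑ j ∈ Finset.range n, a j :=
            (Finset.sum_mul _ _ _).symm
        _ ≤ 1 * ∑ j ∈ Finset.range n, a j := mul_le_mul_left (hpsum n) _
        _ = ∑ j ∈ Finset.range n, a j := one_mul _
  -- identify M with ∑' a j
  have hMsum : ∫⁻ ω, ∑ j ∈ Finset.range (τ ω), f (X j ω) ∂μ = ∑' j, a j := by
    have hpt : ∀ ω, ∑ j ∈ Finset.range (τ ω), f (X j ω)
        = ∑' j, (if j < τ ω then f (X j ω) else 0) := by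
      intro ω
      rw [tsum_eq_sum (s := Finset.range (τ ω))
        (fun j hj => if_neg fun h => hj (Finset.mem_range.mpr h))]
      exact Finset.sum_congr rfl fun j hj => (if_pos (Finset.mem_range.mp hj)).symm
    calc ∫⁻ ω, ∑ j ∈ Finset.range (τ ω), f (X j ω) ∂μ
        = ∫⁻ ω, ∑' j, (if j < τ ω then f (X j ω) else 0) ∂μ := lintegral_congr hpt
      _ = ∑' j, a j := lintegral_tsum fun j => (hmι j).aemeasurable
  rw [hMsum]
  exact iSup_le fun n => (hbound n).trans (ENNReal.sum_le_tsum _)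
end

section
/- Under the same wide-sense regenerative structure started from an arbitrary point x: if E_x[∑_{j=0}^{τ−1} f(X_j)] ≤ K_x and E_φ[∑_{j=0}^{τ−1} f(X_j)] ≤ δ, then E_x f(X_n) ≤ K_x + δ for every n ≥ 0. -/
open MeasureTheory ProbabilityTheory
open scoped ENNReal


lemma sum_triangle (n : ℕ) (g : ℕ → ℕ → ℝ≥0∞) :
    ∑ k ∈ Finset.range n, ∑ j ∈ Finset.range (n - k), g k j
      = ∑ j ∈ Finset.range n, ∑ k ∈ Finset.range (n - j), g k j := by
  have key : ∀ (c : ℕ) (g : ℕ → ℝ≥0∞),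
      (∑ j ∈ Finset.range n, if c + j < n then g j else 0)
        = ∑ j ∈ Finset.range (n - c), g j := by
    intro c g
    rw [← Finset.sum_filter]
    apply Finset.sum_congr _ fun _ _ => rfl
    ext j; simp only [Finset.mem_filter, Finset.mem_range]; omega
  calc ∑ k ∈ Finset.range n, ∑ j ∈ Finset.range (n-k), g k j
      = ∑ k ∈ Finset.range n, ∑ j ∈ Finset.range n, if k + j < n then g k j else 0 :=
        Finset.sum_congr rfl fun k _ => (key k (g k)).symm
    _ = ∑ j ∈ Finset.range n, ∑ k ∈ Finset.range n, if k + j < n then g k j else 0 :=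
        Finset.sum_comm
    _ = ∑ j ∈ Finset.range n, ∑ k ∈ Finset.range n, if j + k < n then g k j else 0 := by
        apply Finset.sum_congr rfl; intro j _; apply Finset.sum_congr rfl; intro k _
        rw [Nat.add_comm]
    _ = ∑ j ∈ Finset.range n, ∑ k ∈ Finset.range (n - j), g k j :=
        Finset.sum_congr rfl fun j _ => key j (fun k => g k j)

/-- renewal sequence associated to a delay distribution. -/
noncomputable def renewalU (p : ℕ → ℝ≥0∞) : ℕ → ℝ≥0∞
  | 0 => 1
  | (l+1) => ∑ k ∈ Finset.range (l+1), p (k+1) * renewalU p (l - k)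
decreasing_by omega

lemma renewalU_zero (p : ℕ → ℝ≥0∞) : renewalU p 0 = 1 := by rw [renewalU]

lemma renewalU_succ (p : ℕ → ℝ≥0∞) (l : ℕ) :
    renewalU p (l+1) = ∑ k ∈ Finset.range (l+1), p (k+1) * renewalU p (l - k) := by
  rw [renewalU]

lemma renewalU_le_one (p : ℕ → ℝ≥0∞) (hp : ∀ n, ∑ k ∈ Finset.range n, p k ≤ 1) :
    ∀ l, renewalU p l ≤ 1 := by
  intro l
  induction l using Nat.strong_induction_on with
  | _ l ih =>
    match l with
    | 0 => rw [renewalU_zero]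
    | (l+1) =>
      rw [renewalU_succ]
      calc ∑ k ∈ Finset.range (l+1), p (k+1) * renewalU p (l - k)
          ≤ ∑ k ∈ Finset.range (l+1), p (k+1) * 1 :=
            Finset.sum_le_sum fun k _ => mul_le_mul_right (ih (l - k) (by omega)) _
        _ = ∑ k ∈ Finset.range (l+1), p (k+1) := by simp
        _ ≤ ∑ k ∈ Finset.range (l+2), p k := by
            conv_rhs => rw [Finset.sum_range_succ']
            exact le_self_add
        _ ≤ 1 := hp _

/-- abstract renewal-equation bound. -/
lemma renewal_bound (p a b : ℕ → ℝ≥0∞) (hp0 : p 0 = 0)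
    (ha : ∀ m, a m = b m + ∑ k ∈ Finset.range (m+1), p k * a (m - k)) :
    ∀ m, a m ≤ ∑ j ∈ Finset.range (m+1), renewalU p (m - j) * b j := by
  intro m
  induction m using Nat.strong_induction_on with
  | _ m ih =>
    match m with
    | 0 =>
      rw [ha 0]
      simp [Finset.sum_range_one, hp0, renewalU_zero]
    | (l+1) =>
      rw [ha (l+1)]
      have h1 : ∑ k ∈ Finset.range (l+2), p k * a (l+1-k)
          = ∑ k ∈ Finset.range (l+1), p (k+1) * a (l-k) := by
        rw [Finset.sum_range_succ']
        simp [hp0]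
      rw [h1]
      calc b (l+1) + ∑ k ∈ Finset.range (l+1), p (k+1) * a (l-k)
          ≤ b (l+1) + ∑ k ∈ Finset.range (l+1), p (k+1) *
              ∑ j ∈ Finset.range (l-k+1), renewalU p (l-k-j) * b j :=
            add_le_add_right (Finset.sum_le_sum fun k _ =>
              mul_le_mul_right (ih (l-k) (by omega)) _) _
        _ = b (l+1) + ∑ k ∈ Finset.range (l+1), ∑ j ∈ Finset.range (l+1-k),
              p (k+1) * renewalU p (l-k-j) * b j := by
            congr 1
            apply Finset.sum_congr rfl
            intro k hk
            rw [Finset.mul_sum]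
            have h2 : l - k + 1 = l + 1 - k := by
              have := Finset.mem_range.mp hk; omega
            rw [h2]
            simp [mul_assoc]
        _ = b (l+1) + ∑ j ∈ Finset.range (l+1), ∑ k ∈ Finset.range (l+1-j),
              p (k+1) * renewalU p (l-k-j) * b j := by
            rw [sum_triangle (l+1) (fun k j => p (k+1) * renewalU p (l-k-j) * b j)]
        _ = b (l+1) + ∑ j ∈ Finset.range (l+1), renewalU p (l+1-j) * b j := by
            congr 1
            apply Finset.sum_congr rfl
            intro j hj
            have hj' := Finset.mem_range.mp hj
            have h2 : l + 1 - j = (l - j) + 1 := by omega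
            rw [h2, renewalU_succ, Finset.sum_mul]
            apply Finset.sum_congr (by rw [← h2])
            intro k _
            have h3 : l - k - j = l - j - k := by omega
            rw [h3]
        _ = ∑ j ∈ Finset.range (l+2), renewalU p (l+1-j) * b j := by
            conv_rhs => rw [Finset.sum_range_succ]
            rw [Nat.sub_self, renewalU_zero, one_mul, add_comm]

section

variable {Ω S : Type*} [MeasurableSpace Ω] [MeasurableSpace S]

lemma post_measurable (X : ℕ → Ω → S) (hX : ∀ n, Measurable (X n))
    (τ : Ω → ℕ) (hτ : Measurable τ) (m : ℕ) :
    Measurable (fun ω => X (τ ω + m) ω) := by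
  have h : Measurable (fun p : Ω × ℕ => X (p.2 + m) p.1) :=
    measurable_from_prod_countable_left (fun k => hX (k + m))
  exact h.comp (measurable_id.prodMk hτ)

lemma regen_step (μ : Measure Ω) (X : ℕ → Ω → S) (hX : ∀ n, Measurable (X n))
    (τ : Ω → ℕ) (hτ : Measurable τ)
    (hindep : IndepFun
      (fun ω => ((fun i => X (min i (τ ω)) ω, τ ω) : (ℕ → S) × ℕ))
      (fun ω => (fun n => X (τ ω + n) ω : ℕ → S)) μ)
    (f : S → ℝ≥0∞) (hf : Measurable f) (k m : ℕ) :
    ∫⁻ ω, (if τ ω = k then (1:ℝ≥0∞) else 0) * f (X (τ ω + m) ω) ∂μ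
      = μ {ω | τ ω = k} * ∫⁻ ω, f (X (τ ω + m) ω) ∂μ := by
  set A : Ω → (ℕ → S) × ℕ := fun ω => ((fun i => X (min i (τ ω)) ω, τ ω))
  set B : Ω → (ℕ → S) := fun ω => (fun n => X (τ ω + n) ω)
  set g : (ℕ → S) × ℕ → ℝ≥0∞ := fun p => if p.2 = k then 1 else 0
  set h : (ℕ → S) → ℝ≥0∞ := fun z => f (z m)
  have hg : Measurable g :=
    Measurable.ite (measurable_snd (measurableSet_singleton k))
      measurable_const measurable_const
  have hh : Measurable h := hf.comp (measurable_pi_apply m)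
  have hGA : Measurable (g ∘ A) := by
    have : (g ∘ A) = fun ω => if τ ω = k then (1:ℝ≥0∞) else 0 := rfl
    rw [this]
    exact Measurable.ite (hτ (measurableSet_singleton k)) measurable_const measurable_const
  have hHB : Measurable (h ∘ B) := hf.comp (post_measurable X hX τ hτ m)
  have hind : IndepFun (g ∘ A) (h ∘ B) μ := hindep.comp hg hh
  have hmul := lintegral_mul_eq_lintegral_mul_lintegral_of_indepFun hGA hHB hind
  have h1 : ∫⁻ ω, ((g ∘ A) * (h ∘ B)) ω ∂μ
      = ∫⁻ ω, (if τ ω = k then (1:ℝ≥0∞) else 0) * f (X (τ ω + m) ω) ∂μ := rfl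
  have h2 : ∫⁻ ω, (g ∘ A) ω ∂μ = μ {ω | τ ω = k} := by
    have : (g ∘ A) = Set.indicator {ω | τ ω = k} (fun _ => (1:ℝ≥0∞)) := by
      funext ω; simp [g, A, Set.indicator_apply]
    rw [this]
    exact lintegral_indicator_one (hτ (measurableSet_singleton k))
  rw [h1, h2] at hmul
  exact hmul

lemma chain_decomp (μ : Measure Ω) (X : ℕ → Ω → S) (hX : ∀ n, Measurable (X n))
    (τ : Ω → ℕ) (hτ : Measurable τ) (f : S → ℝ≥0∞) (hf : Measurable f) (n : ℕ) :
    ∫⁻ ω, f (X n ω) ∂μ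
      = ∫⁻ ω, (if n < τ ω then (1:ℝ≥0∞) else 0) * f (X n ω) ∂μ
        + ∑ k ∈ Finset.range (n+1), ∫⁻ ω, (if τ ω = k then (1:ℝ≥0∞) else 0) * f (X n ω) ∂μ := by
  have hmeas : ∀ k : ℕ, Measurable (fun ω => (if τ ω = k then (1:ℝ≥0∞) else 0) * f (X n ω)) :=
    fun k => (Measurable.ite (hτ (measurableSet_singleton k)) measurable_const
      measurable_const).mul (hf.comp (hX n))
  have hmeas' : Measurable (fun ω => (if n < τ ω then (1:ℝ≥0∞) else 0) * f (X n ω)) :=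
    (Measurable.ite (hτ measurableSet_Ioi) measurable_const
      measurable_const).mul (hf.comp (hX n))
  rw [← lintegral_finset_sum _ (fun k _ => hmeas k), ← lintegral_add_left hmeas']
  apply lintegral_congr
  intro ω
  simp only [ite_mul, one_mul, zero_mul, Finset.sum_ite_eq (Finset.range (n+1)) (τ ω)]
  rcases lt_or_ge n (τ ω) with h | h
  · have h2 : ¬ τ ω < n + 1 := by omega
    simp [h, h2, Finset.mem_range]
  · have h1 : ¬ n < τ ω := by omega
    have h2 : τ ω < n + 1 := by omega
    simp [h1, h2, Finset.mem_range]

lemma sum_fiber_le_one (μ : Measure Ω) [IsProbabilityMeasure μ]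
    (τ : Ω → ℕ) (hτ : Measurable τ) (n : ℕ) :
    ∑ k ∈ Finset.range n, μ {ω | τ ω = k} ≤ 1 := by
  have hdisj : (↑(Finset.range n) : Set ℕ).PairwiseDisjoint
      (fun k => {ω | τ ω = k}) := by
    intro i _ j _ hij
    simp only [Function.onFun, Set.disjoint_left]
    intro ω h1 h2
    exact hij (by simp only [Set.mem_setOf_eq] at h1 h2; omega)
  rw [← measure_biUnion_finset hdisj (fun k _ => hτ (measurableSet_singleton k))]
  calc μ _ ≤ μ Set.univ := measure_mono (Set.subset_univ _)
    _ = 1 := measure_univ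
end
section
variable {Ω' S : Type*} [MeasurableSpace Ω'] [MeasurableSpace S]

lemma Ybound (μφ : Measure Ω') [IsProbabilityMeasure μφ]
    (Y : ℕ → Ω' → S) (hY : ∀ n, Measurable (Y n))
    (σ : Ω' → ℕ) (hσ : Measurable σ) (hσ1 : ∀ ω', 1 ≤ σ ω')
    (hindepY : IndepFun
      (fun ω' => ((fun i => Y (min i (σ ω')) ω', σ ω') : (ℕ → S) × ℕ))
      (fun ω' => (fun n => Y (σ ω' + n) ω' : ℕ → S)) μφ)
    (hpostY : Measure.map (fun ω' => (fun n => Y (σ ω' + n) ω' : ℕ → S)) μφ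
      = Measure.map (fun ω' => (fun n => Y n ω' : ℕ → S)) μφ)
    (f : S → ℝ≥0∞) (hf : Measurable f) (δ : ℝ≥0∞)
    (hδ : ∫⁻ ω', ∑ j ∈ Finset.range (σ ω'), f (Y j ω') ∂μφ ≤ δ) :
    ∀ m, ∫⁻ ω', f (Y m ω') ∂μφ ≤ δ := by
  set a : ℕ → ℝ≥0∞ := fun m => ∫⁻ ω', f (Y m ω') ∂μφ with ha_def
  set b : ℕ → ℝ≥0∞ := fun m => ∫⁻ ω', (if m < σ ω' then (1:ℝ≥0∞) else 0) * f (Y m ω') ∂μφ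
    with hb_def
  set p : ℕ → ℝ≥0∞ := fun k => μφ {ω' | σ ω' = k} with hp_def
  have hp0 : p 0 = 0 := by
    have he : {ω' | σ ω' = 0} = (∅ : Set Ω') := by
      ext ω'; simp only [Set.mem_setOf_eq, Set.mem_empty_iff_false, iff_false]
      have := hσ1 ω'; omega
    simp [hp_def, he]
  have hB : Measurable (fun ω' => (fun n => Y (σ ω' + n) ω' : ℕ → S)) :=
    measurable_pi_lambda _ (fun n => post_measurable Y hY σ hσ n)
  have hYfull : Measurable (fun ω' => (fun n => Y n ω' : ℕ → S)) :=
    measurable_pi_lambda _ hY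
  have htransfer : ∀ r : ℕ, ∫⁻ ω', f (Y (σ ω' + r) ω') ∂μφ = a r := by
    intro r
    calc ∫⁻ ω', f (Y (σ ω' + r) ω') ∂μφ
        = ∫⁻ z, f (z r) ∂(Measure.map (fun ω' => (fun n => Y (σ ω' + n) ω' : ℕ → S)) μφ) :=
          (lintegral_map (hf.comp (measurable_pi_apply r)) hB).symm
      _ = ∫⁻ z, f (z r) ∂(Measure.map (fun ω' => (fun n => Y n ω' : ℕ → S)) μφ) := by
          rw [hpostY]
      _ = a r := lintegral_map (hf.comp (measurable_pi_apply r)) hYfull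
  have ha : ∀ m, a m = b m + ∑ k ∈ Finset.range (m+1), p k * a (m - k) := by
    intro m
    rw [ha_def]
    simp only
    rw [chain_decomp μφ Y hY σ hσ f hf m]
    congr 1
    apply Finset.sum_congr rfl
    intro k hk
    have hk' : k ≤ m := by have := Finset.mem_range.mp hk; omega
    have hcongr : ∫⁻ ω', (if σ ω' = k then (1:ℝ≥0∞) else 0) * f (Y m ω') ∂μφ
        = ∫⁻ ω', (if σ ω' = k then (1:ℝ≥0∞) else 0) * f (Y (σ ω' + (m - k)) ω') ∂μφ := by
      apply lintegral_congr
      intro ω'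
      by_cases h : σ ω' = k
      · have : σ ω' + (m - k) = m := by omega
        rw [this]
      · simp [h]
    rw [hcongr, regen_step μφ Y hY σ hσ hindepY f hf k (m - k), htransfer (m - k)]
  have hpsum : ∀ n, ∑ k ∈ Finset.range n, p k ≤ 1 := sum_fiber_le_one μφ σ hσ
  intro m
  calc a m ≤ ∑ j ∈ Finset.range (m+1), renewalU p (m - j) * b j :=
        renewal_bound p a b hp0 ha m
    _ ≤ ∑ j ∈ Finset.range (m+1), b j := by
        apply Finset.sum_le_sum
        intro j _
        calc renewalU p (m - j) * b j ≤ 1 * b j :=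
              mul_le_mul_left (renewalU_le_one p hpsum (m - j)) _
          _ = b j := one_mul _
    _ = ∫⁻ ω', ∑ j ∈ Finset.range (m+1),
          (if j < σ ω' then (1:ℝ≥0∞) else 0) * f (Y j ω') ∂μφ := by
        rw [lintegral_finset_sum]
        intro j _
        exact (Measurable.ite (hσ measurableSet_Ioi) measurable_const
          measurable_const).mul (hf.comp (hY j))
    _ ≤ ∫⁻ ω', ∑ j ∈ Finset.range (σ ω'), f (Y j ω') ∂μφ := by
        apply lintegral_mono
        intro ω'
        simp only [ite_mul, one_mul, zero_mul]
        rw [← Finset.sum_filter]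
        apply Finset.sum_le_sum_of_subset
        intro j hj
        simp only [Finset.mem_filter, Finset.mem_range] at hj ⊢
        omega
    _ ≤ δ := hδ
end

/-- Wide-sense regeneration from a point `x`: if the chain started at `x` regenerates at
a randomized time `τ` into the chain `(Y, μφ)` started at `φ` (which is itself wide-sense
regenerative at a time `σ ≥ 1`), and if `E_x ∑_{j<τ} f(X_j) ≤ K` and
`E_φ ∑_{j<σ} f(Y_j) ≤ δ`, then `E_x f(X_n) ≤ K + δ` for every `n`. -/
theorem marginal_expectation_bound_from_point
    {Ω Ω' S : Type*} [MeasurableSpace Ω] [MeasurableSpace Ω'] [MeasurableSpace S]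
    (μx : Measure Ω) [IsProbabilityMeasure μx]
    (μφ : Measure Ω') [IsProbabilityMeasure μφ]
    (X : ℕ → Ω → S) (hX : ∀ n, Measurable (X n))
    (Y : ℕ → Ω' → S) (hY : ∀ n, Measurable (Y n))
    (τ : Ω → ℕ) (hτ : Measurable τ)
    (σ : Ω' → ℕ) (hσ : Measurable σ) (hσ1 : ∀ ω', 1 ≤ σ ω')
    (x : S) (hstart : ∀ᵐ ω ∂μx, X 0 ω = x)
    (φ : Measure S) [IsProbabilityMeasure φ]
    (hY0 : Measure.map (Y 0) μφ = φ)
    -- regeneration of the `x`-chain into the `φ`-chain: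
    (hindepX : IndepFun
      (fun ω => ((fun i => X (min i (τ ω)) ω, τ ω) : (ℕ → S) × ℕ))
      (fun ω => (fun n => X (τ ω + n) ω : ℕ → S)) μx)
    (hpostX : Measure.map (fun ω => (fun n => X (τ ω + n) ω : ℕ → S)) μx
      = Measure.map (fun ω' => (fun n => Y n ω' : ℕ → S)) μφ)
    -- wide-sense regenerative structure of the `φ`-chain:
    (hindepY : IndepFun
      (fun ω' => ((fun i => Y (min i (σ ω')) ω', σ ω') : (ℕ → S) × ℕ))
      (fun ω' => (fun n => Y (σ ω' + n) ω' : ℕ → S)) μφ)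
    (hpostY : Measure.map (fun ω' => (fun n => Y (σ ω' + n) ω' : ℕ → S)) μφ
      = Measure.map (fun ω' => (fun n => Y n ω' : ℕ → S)) μφ)
    (f : S → ℝ≥0∞) (hf : Measurable f) (K δ : ℝ≥0∞)
    (hK : ∫⁻ ω, ∑ j ∈ Finset.range (τ ω), f (X j ω) ∂μx ≤ K)
    (hδ : ∫⁻ ω', ∑ j ∈ Finset.range (σ ω'), f (Y j ω') ∂μφ ≤ δ) :
    ∀ n : ℕ, ∫⁻ ω, f (X n ω) ∂μx ≤ K + δ := by
  have hYb : ∀ m, ∫⁻ ω', f (Y m ω') ∂μφ ≤ δ :=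
    Ybound μφ Y hY σ hσ hσ1 hindepY hpostY f hf δ hδ
  have hBX : Measurable (fun ω => (fun n => X (τ ω + n) ω : ℕ → S)) :=
    measurable_pi_lambda _ (fun n => post_measurable X hX τ hτ n)
  have hYfull : Measurable (fun ω' => (fun n => Y n ω' : ℕ → S)) :=
    measurable_pi_lambda _ hY
  have htransfer : ∀ r : ℕ, ∫⁻ ω, f (X (τ ω + r) ω) ∂μx = ∫⁻ ω', f (Y r ω') ∂μφ := by
    intro r
    calc ∫⁻ ω, f (X (τ ω + r) ω) ∂μx
        = ∫⁻ z, f (z r) ∂(Measure.map (fun ω => (fun n => X (τ ω + n) ω : ℕ → S)) μx) :=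
          (lintegral_map (hf.comp (measurable_pi_apply r)) hBX).symm
      _ = ∫⁻ z, f (z r) ∂(Measure.map (fun ω' => (fun n => Y n ω' : ℕ → S)) μφ) := by
          rw [hpostX]
      _ = ∫⁻ ω', f (Y r ω') ∂μφ := lintegral_map (hf.comp (measurable_pi_apply r)) hYfull
  intro n
  rw [chain_decomp μx X hX τ hτ f hf n]
  apply add_le_add
  · -- pre-τ part ≤ K
    refine le_trans ?_ hK
    apply lintegral_mono
    intro ω
    by_cases h : n < τ ω
    · simp only [h, if_pos, one_mul]
      exact Finset.single_le_sum (f := fun j => f (X j ω)) (fun i _ => zero_le)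
        (Finset.mem_range.mpr h)
    · simp [h]
  · -- post-τ part ≤ δ
    calc ∑ k ∈ Finset.range (n+1), ∫⁻ ω, (if τ ω = k then (1:ℝ≥0∞) else 0) * f (X n ω) ∂μx
        ≤ ∑ k ∈ Finset.range (n+1), μx {ω | τ ω = k} * δ := by
          apply Finset.sum_le_sum
          intro k hk
          have hk' : k ≤ n := by have := Finset.mem_range.mp hk; omega
          have hcongr : ∫⁻ ω, (if τ ω = k then (1:ℝ≥0∞) else 0) * f (X n ω) ∂μx
              = ∫⁻ ω, (if τ ω = k then (1:ℝ≥0∞) else 0) * f (X (τ ω + (n - k)) ω) ∂μx := by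
            apply lintegral_congr
            intro ω
            by_cases h : τ ω = k
            · have : τ ω + (n - k) = n := by omega
              rw [this]
            · simp [h]
          rw [hcongr, regen_step μx X hX τ hτ hindepX f hf k (n - k), htransfer (n - k)]
          exact mul_le_mul_right (hYb (n - k)) _
      _ = (∑ k ∈ Finset.range (n+1), μx {ω | τ ω = k}) * δ := (Finset.sum_mul ..).symm
      _ ≤ 1 * δ := mul_le_mul_left (sum_fiber_le_one μx τ hτ (n+1)) _
      _ = δ := one_mul _
end
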